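/- For any integer r ≥ 2, any function f : {0,1,…,r−1}ⁿ → ℝ and any k = 1,…,n, one has ‖ Σ_{S : |S| ≤ k} f̂(S)·u_S ‖₄ ≤ C_r^k · ( Σ_{S : |S| ≤ k} |f̂(S)|² )^{1/2}, where C_r = (9/2)·r³. -/

import Mathlib

open scoped Classical
open Finset

/-- Probability of an event under the uniform distribution on `{0,1,…,r-1}ⁿ`. -/
noncomputable def prr {n r : ℕ} (P : (Fin n → Fin r) → Prop) : ℝ :=
  ((Finset.univ.filter P).card : ℝ) / r ^ n

/-- Expectation of `g(X)` for `X` uniform on `{0,1,…,r-1}ⁿ`. -/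
noncomputable def expecr {n r : ℕ} (g : (Fin n → Fin r) → ℝ) : ℝ :=
  (∑ x, g x) / r ^ n

/-- Variance of `g(X)` for `X` uniform on `{0,1,…,r-1}ⁿ`. -/
noncomputable def varr {n r : ℕ} (g : (Fin n → Fin r) → ℝ) : ℝ :=
  expecr fun x => (g x - expecr g) ^ 2

/-- The `α`-quantile of `f(X)`. -/
noncomputable def quantr {n r : ℕ} (f : (Fin n → Fin r) → ℝ) (α : ℝ) : ℝ :=
  sInf {z : ℝ | α ≤ prr fun x => f x ≤ z}

/-- `Δᵢ f(x) = f(x) - (1/r) ∑_{j=0}^{r-1} f(x_{i,j})` where `x_{i,j}` replaces the `i`-th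
coordinate of `x` by `x_i ⊕ j` (addition modulo `r`). -/
noncomputable def Δi {n r : ℕ} (f : (Fin n → Fin r) → ℝ) (i : Fin n)
    (x : Fin n → Fin r) : ℝ :=
  f x - (1 / r) * ∑ j : Fin r, f (Function.update x i (x i + j))

/-- `ω = e^{2πi/r}`. -/
noncomputable def omg (r : ℕ) : ℂ := Complex.exp (2 * Real.pi * Complex.I / r)

/-- The character `u_S(x) = ω^{⟨S,x⟩}` with `⟨S,x⟩ = ∑ᵢ Sᵢxᵢ mod r`. -/
noncomputable def uS {n r : ℕ} (S x : Fin n → Fin r) : ℂ :=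
  omg r ^ ((∑ i, (S i).val * (x i).val) % r)

/-- `∫ g = r^{-n} ∑_x g(x)`. -/
noncomputable def intg {n r : ℕ} (g : (Fin n → Fin r) → ℂ) : ℂ :=
  (∑ x, g x) / r ^ n

/-- Fourier coefficient `ĝ(S) = ∫ g ⋅ conj(u_S)`. -/
noncomputable def fhat {n r : ℕ} (g : (Fin n → Fin r) → ℂ) (S : Fin n → Fin r) : ℂ :=
  intg fun x => g x * (starRingEnd ℂ) (uS S x)

/-- `‖g‖_q = (∫ |g|^q)^{1/q}`. -/
noncomputable def Lnorm {n r : ℕ} (q : ℝ) (g : (Fin n → Fin r) → ℂ) : ℝ :=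
  ((∑ x, ‖g x‖ ^ q) / r ^ n) ^ (1 / q)

/-- `|S|`: the number of nonzero components of `S`. -/
noncomputable def suppCard {n r : ℕ} [NeZero r] (S : Fin n → Fin r) : ℕ :=
  (Finset.univ.filter fun i => S i ≠ 0).card

/-! ### Auxiliary definitions and lemmas -/

section Aux

abbrev G' (n r : ℕ) := Fin n → Fin r

noncomputable def supp {n r : ℕ} [NeZero r] (V : G' n r) : Finset (Fin n) :=
  univ.filter fun i => V i ≠ 0

noncomputable def WW (n r : ℕ) [NeZero r] (U : Finset (Fin n)) : Finset (G' n r) :=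
  univ.filter fun w => ∀ i ∉ U, w i = 0

noncomputable def TT (n r : ℕ) [NeZero r] (U : Finset (Fin n)) : Finset (G' n r) :=
  univ.filter fun t => ∀ i ∈ U, t i = 0

noncomputable def DD {n r : ℕ} [NeZero r] (b : G' n r → ℝ) (U : Finset (Fin n))
    (w : G' n r) : ℝ :=
  Real.sqrt (∑ t ∈ TT n r U, b (w + t) ^ 2)

noncomputable def cc {n r : ℕ} [NeZero r] (b : G' n r → ℝ) (V : G' n r) : ℝ :=
  ∑ S : G' n r, b S * b (V - S)

abbrev ΩT (n r : ℕ) := (_ : G' n r) × (_ : G' n r) × (_ : G' n r) × G' n r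

noncomputable def Ω (n r : ℕ) [NeZero r] : Finset (ΩT n r) :=
  (univ : Finset (G' n r)).sigma fun V =>
    (WW n r (supp V)).sigma fun _w =>
      (TT n r (supp V)).sigma fun _t => TT n r (supp V)

noncomputable def φm {n r : ℕ} [NeZero r] (p : ΩT n r) :
    G' n r × G' n r × Finset (Fin n) :=
  (p.2.1 + p.2.2.1, (p.1 - p.2.1) + p.2.2.2, supp p.1)

variable {n r : ℕ} [NeZero r]

lemma mem_WW {U : Finset (Fin n)} {w : G' n r} : w ∈ WW n r U ↔ ∀ i ∉ U, w i = 0 := by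
  simp [WW]

lemma mem_TT {U : Finset (Fin n)} {t : G' n r} : t ∈ TT n r U ↔ ∀ i ∈ U, t i = 0 := by
  simp [TT]

lemma mem_supp {V : G' n r} {i : Fin n} : i ∈ supp V ↔ V i ≠ 0 := by
  simp [supp]

lemma mem_Ω {p : ΩT n r} : p ∈ Ω n r ↔
    p.2.1 ∈ WW n r (supp p.1) ∧ p.2.2.1 ∈ TT n r (supp p.1)
      ∧ p.2.2.2 ∈ TT n r (supp p.1) := by
  simp [Ω, Finset.mem_sigma]


lemma omg_prim (r : ℕ) (hr : r ≠ 0) : IsPrimitiveRoot (omg r) r := by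
  simpa [omg] using Complex.isPrimitiveRoot_exp r hr

lemma omg_pow_r (r : ℕ) (hr : r ≠ 0) : omg r ^ r = 1 := (omg_prim r hr).pow_eq_one

lemma omg_pow_mod (r : ℕ) (hr : r ≠ 0) (m : ℕ) : omg r ^ (m % r) = omg r ^ m :=
  (pow_eq_pow_mod m (omg_pow_r r hr)).symm

lemma omg_pow_cast {r : ℕ} (hr : r ≠ 0) {a b : ℕ} (h : (a : ZMod r) = b) :
    omg r ^ a = omg r ^ b := by
  rw [← omg_pow_mod r hr a, ← omg_pow_mod r hr b]
  congr 1
  rwa [ZMod.natCast_eq_natCast_iff] at h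

lemma omg_abs {r : ℕ} : ‖omg r‖ = 1 := by
  simp [omg, Complex.norm_exp]

variable {n r : ℕ} [NeZero r]

lemma uS_eq (S x : Fin n → Fin r) :
    uS S x = omg r ^ (∑ i, (S i).val * (x i).val) := by
  rw [uS, omg_pow_mod r (NeZero.ne r)]

lemma uS_abs (S x : Fin n → Fin r) : ‖uS S x‖ = 1 := by
  rw [uS_eq, norm_pow, omg_abs, one_pow]

lemma uS_add (S T x : Fin n → Fin r) : uS (S + T) x = uS S x * uS T x := by
  rw [uS_eq, uS_eq, uS_eq, ← pow_add]
  apply omg_pow_cast (NeZero.ne r)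
  push_cast
  rw [← Finset.sum_add_distrib]
  apply Finset.sum_congr rfl
  intro i _
  have : ((S + T) i).val = ((S i).val + (T i).val) % r := by
    simp [Fin.add_def]
  rw [this]
  push_cast [ZMod.natCast_mod]
  ring

lemma uS_zero (x : Fin n → Fin r) : uS (0 : Fin n → Fin r) x = 1 := by
  rw [uS_eq]
  simp

lemma uS_conj (S x : Fin n → Fin r) :
    (starRingEnd ℂ) (uS S x) = uS (-S) x := by
  have h1 : uS S x * uS (-S) x = 1 := by rw [← uS_add]; simp [uS_zero]
  have h2 : uS S x * (starRingEnd ℂ) (uS S x) = 1 := by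
    rw [mul_comm, Complex.conj_mul']
    norm_cast
    have := uS_abs S x
    rw [this]; norm_num
  calc (starRingEnd ℂ) (uS S x) = (uS S x)⁻¹ := by
        exact eq_inv_of_mul_eq_one_right h2
    _ = uS (-S) x := by
        exact (eq_inv_of_mul_eq_one_right h1).symm


lemma sum_uS (S : Fin n → Fin r) :
    ∑ x : Fin n → Fin r, uS S x = if S = 0 then ((r : ℂ) ^ n) else 0 := by
  have key : ∑ x : Fin n → Fin r, uS S x
      = ∏ i, ∑ j : Fin r, (omg r ^ (S i).val) ^ (j : ℕ) := by
    rw [← Finset.sum_prod_piFinset (univ : Finset (Fin r)) (fun i j => (omg r ^ (S i).val) ^ (j : ℕ))]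
    rw [Fintype.piFinset_univ]
    apply Finset.sum_congr rfl
    intro x _
    rw [uS_eq, ← Finset.prod_pow_eq_pow_sum]
    exact Finset.prod_congr rfl fun i _ => by rw [← pow_mul]
  rw [key]
  by_cases hS : S = 0
  · simp [hS]
  · rw [if_neg hS]
    obtain ⟨i0, hi0⟩ : ∃ i, S i ≠ 0 := by
      by_contra h
      push_neg at h
      exact hS (funext fun i => h i)
    apply Finset.prod_eq_zero (Finset.mem_univ i0)
    have hz : omg r ^ (S i0).val ≠ 1 := by
      intro h
      have := (omg_prim r (NeZero.ne r)).pow_eq_one_iff_dvd (S i0).val |>.mp h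
      have hlt := (S i0).isLt
      exact hi0 (Fin.ext (Nat.eq_zero_of_dvd_of_lt this hlt))
    have hzr : (omg r ^ (S i0).val) ^ r = 1 := by
      rw [← pow_mul, mul_comm, pow_mul, omg_pow_r r (NeZero.ne r), one_pow]
    rw [Fin.sum_univ_eq_sum_range (fun j => (omg r ^ (S i0).val) ^ j) r]
    rw [geom_sum_eq hz, hzr]
    simp


lemma expansion (F : Finset (Fin n → Fin r)) (a : (Fin n → Fin r) → ℂ) :
    ∑ x : Fin n → Fin r, ‖∑ S ∈ F, a S * uS S x‖ ^ (4:ℕ) ≤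
    ∑ S1 ∈ F, ∑ S2 ∈ F, ∑ S3 ∈ F, ∑ S4 ∈ F,
      (if S1 + S2 = S3 + S4 then
        ‖a S1‖ * ‖a S2‖ * ‖a S3‖ * ‖a S4‖
          * (r:ℝ)^n else 0) := by
  set g : (Fin n → Fin r) → ℂ := fun x => ∑ S ∈ F, a S * uS S x with hg
  have expand : ∀ x, g x * g x * (starRingEnd ℂ) (g x) * (starRingEnd ℂ) (g x)
      = ∑ S1 ∈ F, ∑ S2 ∈ F, ∑ S3 ∈ F, ∑ S4 ∈ F,
        (a S4 * a S3 * (starRingEnd ℂ) (a S2) * (starRingEnd ℂ) (a S1))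
          * uS (S4 + S3 + (-S2) + (-S1)) x := by
    intro x
    have hconj : (starRingEnd ℂ) (g x) = ∑ S ∈ F, (starRingEnd ℂ) (a S) * uS (-S) x := by
      rw [hg]
      simp only [map_sum, map_mul, uS_conj]
    rw [hg, hconj]
    simp only [Finset.sum_mul, Finset.mul_sum]
    apply Finset.sum_congr rfl; intro S1 _
    apply Finset.sum_congr rfl; intro S2 _
    apply Finset.sum_congr rfl; intro S3 _
    apply Finset.sum_congr rfl; intro S4 _
    rw [uS_add, uS_add, uS_add]
    ring
  have h1 : ∀ x, ((‖g x‖ : ℂ)) ^ (4:ℕ)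
      = g x * g x * (starRingEnd ℂ) (g x) * (starRingEnd ℂ) (g x) := by
    intro x
    have hm : g x * (starRingEnd ℂ) (g x) = ((‖g x‖ : ℂ)) ^ 2 := by
      rw [Complex.mul_conj]
      rw [← Complex.sq_norm]
      push_cast
      ring
    calc ((‖g x‖ : ℂ)) ^ (4:ℕ) = (((‖g x‖ : ℂ)) ^ 2) ^ 2 := by ring
      _ = (g x * (starRingEnd ℂ) (g x)) ^ 2 := by rw [hm]
      _ = _ := by ring
  have key : (↑(∑ x : Fin n → Fin r, ‖g x‖ ^ (4:ℕ)) : ℂ)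
      = ∑ S1 ∈ F, ∑ S2 ∈ F, ∑ S3 ∈ F, ∑ S4 ∈ F,
        (a S4 * a S3 * (starRingEnd ℂ) (a S2) * (starRingEnd ℂ) (a S1))
          * (if S4 + S3 + (-S2) + (-S1) = 0 then ((r : ℂ) ^ n) else 0) := by
    push_cast
    rw [Finset.sum_congr rfl (fun x _ => h1 x)]
    rw [Finset.sum_congr rfl (fun x _ => expand x)]
    rw [Finset.sum_comm]
    apply Finset.sum_congr rfl; intro S1 _
    rw [Finset.sum_comm]
    apply Finset.sum_congr rfl; intro S2 _
    rw [Finset.sum_comm]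
    apply Finset.sum_congr rfl; intro S3 _
    rw [Finset.sum_comm]
    apply Finset.sum_congr rfl; intro S4 _
    rw [← Finset.mul_sum, sum_uS]
  have habs : ∑ x : Fin n → Fin r, ‖g x‖ ^ (4:ℕ)
      = ‖(↑(∑ x : Fin n → Fin r, ‖g x‖ ^ (4:ℕ)) : ℂ)‖ := by
    rw [Complex.norm_real, Real.norm_of_nonneg]
    positivity
  rw [habs, key]
  calc ‖∑ S1 ∈ F, ∑ S2 ∈ F, ∑ S3 ∈ F, ∑ S4 ∈ F,
        (a S4 * a S3 * (starRingEnd ℂ) (a S2) * (starRingEnd ℂ) (a S1))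
          * (if S4 + S3 + (-S2) + (-S1) = 0 then ((r : ℂ) ^ n) else 0)‖
      ≤ ∑ S1 ∈ F, ∑ S2 ∈ F, ∑ S3 ∈ F, ∑ S4 ∈ F, ‖
        (a S4 * a S3 * (starRingEnd ℂ) (a S2) * (starRingEnd ℂ) (a S1))
          * (if S4 + S3 + (-S2) + (-S1) = 0 then ((r : ℂ) ^ n) else 0)‖ := by
        refine (norm_sum_le _ _).trans (Finset.sum_le_sum fun S1 _ => ?_)
        refine (norm_sum_le _ _).trans (Finset.sum_le_sum fun S2 _ => ?_)
        refine (norm_sum_le _ _).trans (Finset.sum_le_sum fun S3 _ => ?_)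
        exact norm_sum_le _ _
    _ ≤ _ := by
        apply Finset.sum_le_sum; intro S1 _
        apply Finset.sum_le_sum; intro S2 _
        apply Finset.sum_le_sum; intro S3 _
        apply Finset.sum_le_sum; intro S4 _
        have hiff : S4 + S3 + (-S2) + (-S1) = 0 ↔ S1 + S2 = S3 + S4 := by
          have e : S4 + S3 + (-S2) + (-S1) = (S3 + S4) - (S1 + S2) := by abel
          rw [e, sub_eq_zero, eq_comm]
        by_cases hc : S1 + S2 = S3 + S4
        · rw [if_pos (hiff.mpr hc), if_pos hc, norm_mul]
          simp only [norm_mul, norm_pow, Complex.norm_natCast, Complex.norm_conj]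
          apply le_of_eq
          ring
        · rw [if_neg (fun h => hc (hiff.mp h)), if_neg hc]
          simp


lemma step1 (b : G' n r → ℝ) :
    ∑ S1 : G' n r, ∑ S2 : G' n r, ∑ S3 : G' n r, ∑ S4 : G' n r,
      (if S1 + S2 = S3 + S4 then b S1 * b S2 * b S3 * b S4 else 0)
    = ∑ V : G' n r, (cc b V) ^ 2 := by
  have inner : ∀ (V : G' n r) (c : ℝ), (∑ S3 : G' n r, ∑ S4 : G' n r,
      (if V = S3 + S4 then c * (b S3 * b S4) else 0)) = c * cc b V := by
    intro V c
    rw [cc, Finset.mul_sum]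
    apply Finset.sum_congr rfl; intro S3 _
    have : ∀ S4 : G' n r, (if V = S3 + S4 then c * (b S3 * b S4) else 0)
        = (if S4 = V - S3 then c * (b S3 * b S4) else 0) := by
      intro S4
      apply if_congr _ rfl rfl
      constructor
      · intro h; rw [h]; abel
      · intro h; rw [h]; abel
    rw [Finset.sum_congr rfl (fun S4 _ => this S4), Finset.sum_ite_eq' univ (V - S3)
      (fun S4 => c * (b S3 * b S4)), if_pos (Finset.mem_univ _)]
  have lhs_eq : ∀ S1 S2 : G' n r, (∑ S3 : G' n r, ∑ S4 : G' n r,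
      (if S1 + S2 = S3 + S4 then b S1 * b S2 * b S3 * b S4 else 0))
      = (b S1 * b S2) * cc b (S1 + S2) := by
    intro S1 S2
    rw [← inner (S1 + S2) (b S1 * b S2)]
    apply Finset.sum_congr rfl; intro S3 _
    apply Finset.sum_congr rfl; intro S4 _
    congr 1
    ring
  calc ∑ S1 : G' n r, ∑ S2 : G' n r, ∑ S3 : G' n r, ∑ S4 : G' n r,
      (if S1 + S2 = S3 + S4 then b S1 * b S2 * b S3 * b S4 else 0)
      = ∑ S1 : G' n r, ∑ S2 : G' n r, (b S1 * b S2) * cc b (S1 + S2) := by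
        apply Finset.sum_congr rfl; intro S1 _
        apply Finset.sum_congr rfl; intro S2 _
        exact lhs_eq S1 S2
    _ = ∑ S1 : G' n r, ∑ S2 : G' n r, ∑ V : G' n r,
        (if V = S1 + S2 then (b S1 * b S2) * cc b V else 0) := by
        apply Finset.sum_congr rfl; intro S1 _
        apply Finset.sum_congr rfl; intro S2 _
        rw [Finset.sum_ite_eq' univ (S1 + S2) (fun V => (b S1 * b S2) * cc b V),
          if_pos (Finset.mem_univ _)]
    _ = ∑ V : G' n r, ∑ S1 : G' n r, ∑ S2 : G' n r,
        (if V = S1 + S2 then (b S1 * b S2) * cc b V else 0) := by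
        rw [Finset.sum_congr rfl (fun S1 (_ : S1 ∈ univ) => Finset.sum_comm), Finset.sum_comm]
    _ = ∑ V : G' n r, (cc b V) ^ 2 := by
        apply Finset.sum_congr rfl; intro V _
        have : ∀ S1 S2 : G' n r, (if V = S1 + S2 then (b S1 * b S2) * cc b V else 0)
            = (if V = S1 + S2 then (b S1 * b S2) else 0) * cc b V := by
          intro S1 S2; split <;> simp
        simp_rw [this, ← Finset.sum_mul]
        have h2 : ∀ S1 : G' n r, (∑ S2 : G' n r, if V = S1 + S2 then b S1 * b S2 else 0)
            = b S1 * b (V - S1) := by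
          intro S1
          have : ∀ S2 : G' n r, (if V = S1 + S2 then b S1 * b S2 else 0)
              = (if S2 = V - S1 then b S1 * b S2 else 0) := by
            intro S2
            apply if_congr _ rfl rfl
            constructor
            · intro h; rw [h]; abel
            · intro h; rw [h]; abel
          rw [Finset.sum_congr rfl (fun S2 _ => this S2),
            Finset.sum_ite_eq' univ (V - S1) (fun S2 => b S1 * b S2),
            if_pos (Finset.mem_univ _)]
        simp_rw [h2]
        rw [← cc]
        ring


lemma c_split (b : G' n r → ℝ) (V : G' n r) :
    cc b V = ∑ w ∈ WW n r (supp V), ∑ t ∈ TT n r (supp V), b (w + t) * b (V - w - t) := by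
  rw [cc, ← Finset.sum_product']
  apply Finset.sum_nbij' (fun S => (fun i => if i ∈ supp V then S i else 0,
      fun i => if i ∈ supp V then 0 else S i))
    (fun p => p.1 + p.2)
  · intro S _
    rw [Finset.mem_product]
    constructor
    · rw [mem_WW]; intro i hi; simp [hi]
    · rw [mem_TT]; intro i hi; simp [hi]
  · intro p _; exact Finset.mem_univ _
  · intro S _
    funext i
    by_cases h : i ∈ supp V <;> simp [h, Pi.add_apply]
  · rintro ⟨w, t⟩ hp
    rw [Finset.mem_product, mem_WW, mem_TT] at hp
    obtain ⟨hw, ht⟩ := hp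
    have h1 : (fun i => if i ∈ supp V then (w + t) i else 0) = w := by
      funext i
      by_cases h : i ∈ supp V
      · simp only [if_pos h, Pi.add_apply]; rw [show t i = 0 from ht i h, add_zero]
      · simp only [if_neg h]; exact (show w i = 0 from hw i h).symm
    have h2 : (fun i => if i ∈ supp V then (0 : Fin r) else (w + t) i) = t := by
      funext i
      by_cases h : i ∈ supp V
      · simp only [if_pos h]; exact (show t i = 0 from ht i h).symm
      · simp only [if_neg h, Pi.add_apply]; rw [show w i = 0 from hw i h, zero_add]
    simp only [Prod.mk.injEq]
    exact ⟨h1, h2⟩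
  · intro S _
    have hsum : ((fun i => if i ∈ supp V then S i else 0)
        + fun i => if i ∈ supp V then (0 : Fin r) else S i) = S := by
      funext i; by_cases h : i ∈ supp V <;> simp [h, Pi.add_apply]
    simp only
    rw [sub_sub, hsum]


lemma DD_nonneg (b : G' n r → ℝ) (U : Finset (Fin n)) (w : G' n r) : 0 ≤ DD b U w :=
  Real.sqrt_nonneg _

lemma DD_sq (b : G' n r → ℝ) (U : Finset (Fin n)) (w : G' n r) :
    (DD b U w) ^ 2 = ∑ t ∈ TT n r U, b (w + t) ^ 2 := by
  rw [DD, Real.sq_sqrt]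
  positivity

lemma claim_cs (b : G' n r → ℝ) (hb : ∀ S, 0 ≤ b S) (U : Finset (Fin n)) (w z : G' n r) :
    ∑ t ∈ TT n r U, b (w + t) * b (z - t) ≤ DD b U w * DD b U z := by
  have hX : (0:ℝ) ≤ ∑ t ∈ TT n r U, b (w + t) ^ 2 := by positivity
  have hA : (0:ℝ) ≤ ∑ t ∈ TT n r U, b (w + t) * b (z - t) :=
    Finset.sum_nonneg fun t _ => mul_nonneg (hb _) (hb _)
  have hneg : ∑ t ∈ TT n r U, b (z - t) ^ 2 = ∑ t ∈ TT n r U, b (z + t) ^ 2 := by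
    apply Finset.sum_nbij' (fun t => -t) (fun t => -t)
    · intro t ht
      rw [mem_TT] at ht ⊢
      intro i hi
      simp [Pi.neg_apply, ht i hi]
    · intro t ht
      rw [mem_TT] at ht ⊢
      intro i hi
      simp [Pi.neg_apply, ht i hi]
    · intro t _; simp
    · intro t _; simp
    · intro t _
      rw [sub_eq_add_neg]
  have hcs := Finset.sum_mul_sq_le_sq_mul_sq (TT n r U) (fun t => b (w + t))
    (fun t => b (z - t))
  rw [DD, DD, ← Real.sqrt_mul hX]
  rw [show (∑ t ∈ TT n r U, b (z + t) ^ 2) = ∑ t ∈ TT n r U, b (z - t) ^ 2 from hneg.symm]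
  exact (Real.le_sqrt hA (by positivity)).mpr hcs

lemma cc_nonneg (b : G' n r → ℝ) (hb : ∀ S, 0 ≤ b S) (V : G' n r) : 0 ≤ cc b V :=
  Finset.sum_nonneg fun S _ => mul_nonneg (hb _) (hb _)

lemma claim3 (b : G' n r → ℝ) (hb : ∀ S, 0 ≤ b S) (V : G' n r) :
    cc b V ≤ ∑ w ∈ WW n r (supp V), DD b (supp V) w * DD b (supp V) (V - w) := by
  rw [c_split b V]
  apply Finset.sum_le_sum
  intro w _
  exact claim_cs b hb (supp V) w (V - w)

lemma claim4 (b : G' n r → ℝ) (hb : ∀ S, 0 ≤ b S) (V : G' n r) :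
    (cc b V) ^ 2 ≤ ((WW n r (supp V)).card : ℝ) *
      ∑ w ∈ WW n r (supp V), (DD b (supp V) w) ^ 2 * (DD b (supp V) (V - w)) ^ 2 := by
  calc (cc b V) ^ 2
      ≤ (∑ w ∈ WW n r (supp V), DD b (supp V) w * DD b (supp V) (V - w)) ^ 2 :=
        pow_le_pow_left₀ (cc_nonneg b hb V) (claim3 b hb V) 2
    _ ≤ ((WW n r (supp V)).card : ℝ) *
        ∑ w ∈ WW n r (supp V), (DD b (supp V) w * DD b (supp V) (V - w)) ^ 2 :=
        sq_sum_le_card_mul_sum_sq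
    _ = _ := by
        congr 1
        apply Finset.sum_congr rfl
        intro w _
        rw [mul_pow]

lemma WW_card (U : Finset (Fin n)) : (WW n r U).card ≤ r ^ U.card := by
  have : (WW n r U).card ≤ (univ : Finset ({i // i ∈ U} → Fin r)).card := by
    apply Finset.card_le_card_of_injOn (fun w (i : {i // i ∈ U}) => w i.1)
    · intro w _; exact Finset.mem_univ _
    · intro w hw w' hw' h
      rw [Finset.mem_coe, mem_WW] at hw hw'
      funext i
      by_cases hi : i ∈ U
      · exact congrFun h ⟨i, hi⟩
      · rw [hw i hi, hw' i hi]
  calc (WW n r U).card ≤ (univ : Finset ({i // i ∈ U} → Fin r)).card := this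
    _ = r ^ U.card := by
        rw [Finset.card_univ, Fintype.card_fun, Fintype.card_fin, Fintype.card_coe]

lemma supp_sub_union (V S : G' n r) : supp V ⊆ supp S ∪ supp (V - S) := by
  intro i hi
  simp only [supp, Finset.mem_filter, Finset.mem_union, Finset.mem_univ, true_and] at hi ⊢
  by_contra h
  push_neg at h
  apply hi
  have : V i = S i + (V - S) i := by simp [Pi.sub_apply]
  rw [this, h.1, h.2, add_zero]

lemma step2 (b : G' n r → ℝ) (hb : ∀ S, 0 ≤ b S) (k : ℕ)
    (hsupp : ∀ S, b S ≠ 0 → (supp S).card ≤ k) (V : G' n r) :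
    (cc b V) ^ 2 ≤ (r:ℝ) ^ (2 * k) *
      ∑ w ∈ WW n r (supp V), (DD b (supp V) w) ^ 2 * (DD b (supp V) (V - w)) ^ 2 := by
  have hsum_nonneg : (0:ℝ) ≤
      ∑ w ∈ WW n r (supp V), (DD b (supp V) w) ^ 2 * (DD b (supp V) (V - w)) ^ 2 :=
    Finset.sum_nonneg fun w _ => mul_nonneg (sq_nonneg _) (sq_nonneg _)
  by_cases hc : cc b V = 0
  · rw [hc]
    simpa using mul_nonneg (by positivity : (0:ℝ) ≤ (r:ℝ)^(2*k)) hsum_nonneg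
  · obtain ⟨S, hS⟩ : ∃ S, b S * b (V - S) ≠ 0 := by
      by_contra h
      push_neg at h
      exact hc (Finset.sum_eq_zero fun S _ => h S)
    have hbS : b S ≠ 0 := fun h => hS (by rw [h, zero_mul])
    have hbVS : b (V - S) ≠ 0 := fun h => hS (by rw [h, mul_zero])
    have hcard : (supp V).card ≤ 2 * k := by
      calc (supp V).card ≤ (supp S ∪ supp (V - S)).card :=
            Finset.card_le_card (supp_sub_union V S)
        _ ≤ (supp S).card + (supp (V - S)).card := Finset.card_union_le _ _
        _ ≤ k + k := Nat.add_le_add (hsupp S hbS) (hsupp _ hbVS)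
        _ = 2 * k := (two_mul k).symm
    have hWWcard : ((WW n r (supp V)).card : ℝ) ≤ (r:ℝ) ^ (2 * k) := by
      calc ((WW n r (supp V)).card : ℝ) ≤ ((r ^ (supp V).card : ℕ) : ℝ) := by
            exact_mod_cast WW_card (supp V)
        _ ≤ ((r ^ (2 * k) : ℕ) : ℝ) := by
            apply Nat.cast_le.mpr
            apply Nat.pow_le_pow_right (Nat.pos_of_ne_zero (NeZero.ne r)) hcard
        _ = (r:ℝ) ^ (2 * k) := by push_cast; ring
    exact le_trans (claim4 b hb V) (mul_le_mul_of_nonneg_right hWWcard hsum_nonneg)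


lemma φm_inj : Set.InjOn (φm (n := n) (r := r)) (Ω n r : Set (ΩT n r)) := by
  rintro ⟨V, w, t, t'⟩ hp ⟨V', w', s, s'⟩ hq h
  rw [Finset.mem_coe, mem_Ω] at hp hq
  obtain ⟨hw, ht, ht'⟩ := hp
  obtain ⟨hw', hs, hs'⟩ := hq
  rw [mem_WW] at hw hw'
  rw [mem_TT] at ht ht' hs hs'
  simp only [φm, Prod.mk.injEq] at h
  obtain ⟨hA, hB, hU⟩ := h
  -- w determined by A and U
  have hwkey : ∀ (V₀ w₀ t₀ : G' n r), (∀ i ∉ supp V₀, w₀ i = 0) →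
      (∀ i ∈ supp V₀, t₀ i = 0) →
      w₀ = fun i => if i ∈ supp V₀ then (w₀ + t₀) i else 0 := by
    intro V₀ w₀ t₀ h1 h2
    funext i
    by_cases hi : i ∈ supp V₀
    · simp [hi, Pi.add_apply, h2 i hi]
    · simp [hi, h1 i hi]
  have hw_eq : w = w' := by
    rw [hwkey V w t hw ht, hwkey V' w' s hw' hs, ← hA, hU]
  -- V determined
  have hVkey : ∀ (V₀ w₀ t₀ : G' n r), (∀ i ∉ supp V₀, w₀ i = 0) →
      (∀ i ∈ supp V₀, t₀ i = 0) →
      V₀ = fun i => if i ∈ supp V₀ then (w₀ + ((V₀ - w₀) + t₀)) i else 0 := by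
    intro V₀ w₀ t₀ h1 h2
    funext i
    by_cases hi : i ∈ supp V₀
    · simp [hi, Pi.add_apply, Pi.sub_apply, h2 i hi]
    · simp only [if_neg hi]
      by_contra hne
      exact hi (mem_supp.mpr hne)
  have hV_eq : V = V' := by
    rw [hVkey V w t' hw ht', hVkey V' w' s' hw' hs', ← hB, ← hU, ← hw_eq]
  subst hV_eq
  have ht_eq : t = s := by
    have : w + t = w' + s := hA
    rw [← hw_eq] at this
    exact add_left_cancel this
  have ht'_eq : t' = s' := by
    have : (V - w) + t' = (V - w') + s' := hB
    rw [← hw_eq] at this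
    exact add_left_cancel this
  subst hw_eq; subst ht_eq; subst ht'_eq
  rfl

lemma counting (b : G' n r → ℝ) (hb : ∀ S, 0 ≤ b S) (k : ℕ)
    (hsupp : ∀ S, b S ≠ 0 → (supp S).card ≤ k) :
    ∑ p ∈ Ω n r, b (p.2.1 + p.2.2.1) ^ 2 * b ((p.1 - p.2.1) + p.2.2.2) ^ 2
      ≤ (4:ℝ) ^ k * (∑ S : G' n r, b S ^ 2) ^ 2 := by
  have hrw : ∀ p ∈ Ω n r, b (p.2.1 + p.2.2.1) ^ 2 * b ((p.1 - p.2.1) + p.2.2.2) ^ 2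
      = b (φm p).1 ^ 2 * b (φm p).2.1 ^ 2 := by
    intro p _; rfl
  rw [Finset.sum_congr rfl hrw]
  have himg := Finset.sum_image (s := Ω n r) (g := φm)
    (f := fun y : G' n r × G' n r × Finset (Fin n) => b y.1 ^ 2 * b y.2.1 ^ 2)
    (fun x hx y hy h => φm_inj hx hy h)
  rw [← himg]
  have hsubset : (Ω n r).image φm ⊆
      (univ : Finset (G' n r × G' n r × Finset (Fin n))).filter
        fun y => y.2.2 ⊆ supp y.1 ∪ supp y.2.1 := by
    intro y hy
    rw [Finset.mem_image] at hy
    obtain ⟨p, hp, rfl⟩ := hy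
    obtain ⟨V, w, t, t'⟩ := p
    rw [mem_Ω] at hp
    obtain ⟨hw, ht, ht'⟩ := hp
    rw [mem_WW] at hw
    rw [mem_TT] at ht ht'
    rw [Finset.mem_filter]
    refine ⟨Finset.mem_univ _, ?_⟩
    intro i hi
    simp only [φm] at hi ⊢
    rw [mem_supp] at hi
    rw [Finset.mem_union, mem_supp, mem_supp]
    by_contra hcon
    push_neg at hcon
    apply hi
    have hiV : i ∈ supp V := mem_supp.mpr hi
    have e1 : t i = 0 := ht i hiV
    have e2 : t' i = 0 := ht' i hiV
    have h1 : (w + t) i + ((V - w) + t') i = V i := by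
      simp only [Pi.add_apply, Pi.sub_apply, e1, e2]
      abel
    rw [hcon.1, hcon.2, zero_add] at h1
    exact h1.symm ▸ rfl
  calc ∑ y ∈ (Ω n r).image φm, b y.1 ^ 2 * b y.2.1 ^ 2
      ≤ ∑ y ∈ (univ : Finset (G' n r × G' n r × Finset (Fin n))).filter
          (fun y => y.2.2 ⊆ supp y.1 ∪ supp y.2.1), b y.1 ^ 2 * b y.2.1 ^ 2 := by
        apply Finset.sum_le_sum_of_subset_of_nonneg hsubset
        intro y _ _
        positivity
    _ = ∑ A : G' n r, ∑ B : G' n r, ((2:ℝ) ^ (supp A ∪ supp B).card * (b A ^ 2 * b B ^ 2)) := by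
        rw [Finset.sum_filter, Fintype.sum_prod_type]
        apply Finset.sum_congr rfl; intro A _
        rw [Fintype.sum_prod_type]
        apply Finset.sum_congr rfl; intro B _
        have : ∀ U : Finset (Fin n), (if U ⊆ supp A ∪ supp B then b A ^ 2 * b B ^ 2 else 0)
            = if U ∈ (supp A ∪ supp B).powerset then b A ^ 2 * b B ^ 2 else 0 := by
          intro U
          apply if_congr _ rfl rfl
          exact (Finset.mem_powerset).symm
        rw [Finset.sum_congr rfl (fun U _ => this U), Finset.sum_ite_mem,
          Finset.univ_inter, Finset.sum_const, Finset.card_powerset, nsmul_eq_mul]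
        push_cast
        ring
    _ ≤ ∑ A : G' n r, ∑ B : G' n r, ((4:ℝ) ^ k * (b A ^ 2 * b B ^ 2)) := by
        apply Finset.sum_le_sum; intro A _
        apply Finset.sum_le_sum; intro B _
        by_cases hA : b A = 0
        · simp [hA]
        by_cases hB : b B = 0
        · simp [hB]
        apply mul_le_mul_of_nonneg_right _ (by positivity)
        calc (2:ℝ) ^ (supp A ∪ supp B).card ≤ (2:ℝ) ^ (2 * k) := by
              apply pow_le_pow_right₀ one_le_two
              calc (supp A ∪ supp B).card ≤ (supp A).card + (supp B).card :=
                    Finset.card_union_le _ _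
                _ ≤ k + k := Nat.add_le_add (hsupp A hA) (hsupp B hB)
                _ = 2 * k := (two_mul k).symm
          _ = (4:ℝ) ^ k := by rw [pow_mul]; norm_num
    _ = (4:ℝ) ^ k * (∑ S : G' n r, b S ^ 2) ^ 2 := by
        simp_rw [← Finset.mul_sum, ← Finset.sum_mul]
        rw [sq]



lemma step3 (b : G' n r → ℝ) :
    ∑ V : G' n r, ∑ w ∈ WW n r (supp V), (DD b (supp V) w) ^ 2 * (DD b (supp V) (V - w)) ^ 2
      = ∑ p ∈ Ω n r, b (p.2.1 + p.2.2.1) ^ 2 * b ((p.1 - p.2.1) + p.2.2.2) ^ 2 := by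
  rw [Ω, Finset.sum_sigma]
  apply Finset.sum_congr rfl; intro V _
  rw [Finset.sum_sigma]
  apply Finset.sum_congr rfl; intro w _
  rw [Finset.sum_sigma]
  rw [DD_sq, DD_sq, Finset.sum_mul_sum]


lemma comb (b : G' n r → ℝ) (hb : ∀ S, 0 ≤ b S) (k : ℕ)
    (hsupp : ∀ S, b S ≠ 0 → (supp S).card ≤ k) :
    ∑ S1 : G' n r, ∑ S2 : G' n r, ∑ S3 : G' n r, ∑ S4 : G' n r,
      (if S1 + S2 = S3 + S4 then b S1 * b S2 * b S3 * b S4 else 0)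
      ≤ (4:ℝ) ^ k * (r:ℝ) ^ (2 * k) * (∑ S : G' n r, b S ^ 2) ^ 2 := by
  rw [step1 b]
  calc ∑ V : G' n r, cc b V ^ 2
      ≤ ∑ V : G' n r, ((r:ℝ) ^ (2*k) * ∑ w ∈ WW n r (supp V),
          (DD b (supp V) w)^2 * (DD b (supp V) (V - w))^2) :=
        Finset.sum_le_sum fun V _ => step2 b hb k hsupp V
    _ = (r:ℝ)^(2*k) * ∑ V : G' n r, ∑ w ∈ WW n r (supp V),
          (DD b (supp V) w)^2 * (DD b (supp V) (V - w))^2 := by rw [Finset.mul_sum]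
    _ = (r:ℝ)^(2*k) * ∑ p ∈ Ω n r, b (p.2.1 + p.2.2.1)^2 * b ((p.1 - p.2.1) + p.2.2.2)^2 := by
        rw [step3]
    _ ≤ (r:ℝ)^(2*k) * ((4:ℝ)^k * (∑ S : G' n r, b S ^ 2)^2) :=
        mul_le_mul_of_nonneg_left (counting b hb k hsupp) (by positivity)
    _ = _ := by ring

lemma supp_card_eq (S : G' n r) : (supp S).card = suppCard S := rfl

end Aux

theorem stmt_13 {n : ℕ} (r : ℕ) [NeZero r] (hr : 2 ≤ r)
    (f : (Fin n → Fin r) → ℝ) (k : ℕ) (hk1 : 1 ≤ k) (hkn : k ≤ n) :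
    Lnorm 4 (fun x => ∑ S ∈ Finset.univ.filter fun S => suppCard S ≤ k,
        fhat (fun y => (f y : ℂ)) S * uS S x) ≤
      ((9 / 2) * (r : ℝ) ^ 3) ^ k *
        Real.sqrt (∑ S ∈ Finset.univ.filter fun S => suppCard S ≤ k,
          ‖fhat (fun y => (f y : ℂ)) S‖ ^ 2) := by
  have hrR : (2:ℝ) ≤ (r:ℝ) := by exact_mod_cast hr
  have hr1 : (1:ℝ) ≤ (r:ℝ) := le_trans one_le_two hrR
  have hrn : (0:ℝ) < (r:ℝ) ^ n := by positivity
  set a : (Fin n → Fin r) → ℂ := fhat (fun y => (f y : ℂ)) with ha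
  set F : Finset (Fin n → Fin r) := Finset.univ.filter fun S => suppCard S ≤ k with hF
  set b : G' n r → ℝ := fun S => if suppCard S ≤ k then ‖a S‖ else 0 with hbdef
  have hb : ∀ S, 0 ≤ b S := by
    intro S
    rw [hbdef]
    dsimp only
    split
    · exact norm_nonneg _
    · exact le_rfl
  have hbsupp : ∀ S, b S ≠ 0 → (supp S).card ≤ k := by
    intro S h
    rw [supp_card_eq]
    by_contra hcon
    apply h
    rw [hbdef]
    dsimp only
    rw [if_neg hcon]
  set M : ℝ := ∑ S : G' n r, b S ^ 2 with hM
  have hM0 : (0:ℝ) ≤ M := Finset.sum_nonneg fun S _ => sq_nonneg _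
  have hMF : M = ∑ S ∈ F, ‖a S‖ ^ 2 := by
    rw [hM, hF, Finset.sum_filter]
    apply Finset.sum_congr rfl
    intro S _
    rw [hbdef]
    dsimp only
    split <;> simp
  have hquad := comb b hb k hbsupp
  have hexp := expansion F a
  have hbF : ∀ S, S ∉ F → b S = 0 := by
    intro S hS
    rw [hF, Finset.mem_filter] at hS
    push_neg at hS
    rw [hbdef]
    dsimp only
    rw [if_neg (Nat.not_le.mpr (hS (Finset.mem_univ S)))]
  have hlink : (∑ S1 ∈ F, ∑ S2 ∈ F, ∑ S3 ∈ F, ∑ S4 ∈ F,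
      (if S1 + S2 = S3 + S4 then
        ‖a S1‖ * ‖a S2‖ * ‖a S3‖ * ‖a S4‖
          * (r:ℝ)^n else 0))
      = (r:ℝ)^n * ∑ S1 : G' n r, ∑ S2 : G' n r, ∑ S3 : G' n r, ∑ S4 : G' n r,
        (if S1 + S2 = S3 + S4 then b S1 * b S2 * b S3 * b S4 else 0) := by
    have hbin : ∀ S, S ∈ F → b S = ‖a S‖ := by
      intro S hS
      rw [hF, Finset.mem_filter] at hS
      rw [hbdef]
      dsimp only
      rw [if_pos hS.2]
    have ext4 : ∀ S1 S2 S3 : G' n r, (∑ S4 ∈ F,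
        (if S1 + S2 = S3 + S4 then b S1 * b S2 * b S3 * b S4 else 0))
        = ∑ S4 : G' n r, (if S1 + S2 = S3 + S4 then b S1 * b S2 * b S3 * b S4 else 0) := by
      intro S1 S2 S3
      apply Finset.sum_subset (Finset.subset_univ F)
      intro S4 _ h4
      rw [hbF S4 h4]
      split <;> simp
    have ext3 : ∀ S1 S2 : G' n r, (∑ S3 ∈ F, ∑ S4 : G' n r,
        (if S1 + S2 = S3 + S4 then b S1 * b S2 * b S3 * b S4 else 0))
        = ∑ S3 : G' n r, ∑ S4 : G' n r,
          (if S1 + S2 = S3 + S4 then b S1 * b S2 * b S3 * b S4 else 0) := by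
      intro S1 S2
      apply Finset.sum_subset (Finset.subset_univ F)
      intro S3 _ h3
      apply Finset.sum_eq_zero
      intro S4 _
      rw [hbF S3 h3]
      split <;> simp
    have ext2 : ∀ S1 : G' n r, (∑ S2 ∈ F, ∑ S3 : G' n r, ∑ S4 : G' n r,
        (if S1 + S2 = S3 + S4 then b S1 * b S2 * b S3 * b S4 else 0))
        = ∑ S2 : G' n r, ∑ S3 : G' n r, ∑ S4 : G' n r,
          (if S1 + S2 = S3 + S4 then b S1 * b S2 * b S3 * b S4 else 0) := by
      intro S1
      apply Finset.sum_subset (Finset.subset_univ F)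
      intro S2 _ h2
      apply Finset.sum_eq_zero; intro S3 _
      apply Finset.sum_eq_zero; intro S4 _
      rw [hbF S2 h2]
      split <;> simp
    have ext1 : (∑ S1 ∈ F, ∑ S2 : G' n r, ∑ S3 : G' n r, ∑ S4 : G' n r,
        (if S1 + S2 = S3 + S4 then b S1 * b S2 * b S3 * b S4 else 0))
        = ∑ S1 : G' n r, ∑ S2 : G' n r, ∑ S3 : G' n r, ∑ S4 : G' n r,
          (if S1 + S2 = S3 + S4 then b S1 * b S2 * b S3 * b S4 else 0) := by
      apply Finset.sum_subset (Finset.subset_univ F)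
      intro S1 _ h1
      apply Finset.sum_eq_zero; intro S2 _
      apply Finset.sum_eq_zero; intro S3 _
      apply Finset.sum_eq_zero; intro S4 _
      rw [hbF S1 h1]
      split <;> simp
    calc (∑ S1 ∈ F, ∑ S2 ∈ F, ∑ S3 ∈ F, ∑ S4 ∈ F,
        (if S1 + S2 = S3 + S4 then
          ‖a S1‖ * ‖a S2‖ * ‖a S3‖ * ‖a S4‖
            * (r:ℝ)^n else 0))
        = ∑ S1 ∈ F, ∑ S2 ∈ F, ∑ S3 ∈ F, ∑ S4 ∈ F,
          (r:ℝ)^n * (if S1 + S2 = S3 + S4 then b S1 * b S2 * b S3 * b S4 else 0) := by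
          refine Finset.sum_congr rfl fun S1 h1 => Finset.sum_congr rfl fun S2 h2 =>
            Finset.sum_congr rfl fun S3 h3 => Finset.sum_congr rfl fun S4 h4 => ?_
          rw [hbin S1 h1, hbin S2 h2, hbin S3 h3, hbin S4 h4]
          split
          · ring
          · ring
      _ = (r:ℝ)^n * ∑ S1 ∈ F, ∑ S2 ∈ F, ∑ S3 ∈ F, ∑ S4 ∈ F,
          (if S1 + S2 = S3 + S4 then b S1 * b S2 * b S3 * b S4 else 0) := by
          simp_rw [← Finset.mul_sum]
      _ = _ := by
          rw [Finset.sum_congr rfl (fun S1 (_ : S1 ∈ F) => Finset.sum_congr rfl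
              (fun S2 (_ : S2 ∈ F) => Finset.sum_congr rfl
                (fun S3 (_ : S3 ∈ F) => ext4 S1 S2 S3))),
            Finset.sum_congr rfl (fun S1 (_ : S1 ∈ F) => Finset.sum_congr rfl
              (fun S2 (_ : S2 ∈ F) => ext3 S1 S2)),
            Finset.sum_congr rfl (fun S1 (_ : S1 ∈ F) => ext2 S1),
            ext1]
  have hT4 : ∑ x : G' n r, ‖∑ S ∈ F, a S * uS S x‖ ^ (4:ℕ)
      ≤ (r:ℝ)^n * ((4:ℝ)^k * (r:ℝ)^(2*k) * M ^ 2) := by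
    refine hexp.trans ?_
    rw [hlink]
    exact mul_le_mul_of_nonneg_left hquad (by positivity)
  set RHS0 : ℝ := ((9 / 2) * (r : ℝ) ^ 3) ^ k * Real.sqrt M with hRHS0
  have hRHS0nn : 0 ≤ RHS0 := by positivity
  have hQ : (4:ℝ)^k * (r:ℝ)^(2*k) * M ^ 2 ≤ RHS0 ^ (4:ℕ) := by
    have hRHS4 : RHS0 ^ (4:ℕ) = (((9/2) * (r:ℝ)^3) ^ (4:ℕ)) ^ k * M ^ 2 := by
      rw [hRHS0, mul_pow, ← pow_right_comm]
      congr 1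
      rw [show (4:ℕ) = 2 * 2 from rfl, pow_mul, Real.sq_sqrt hM0]
    rw [hRHS4]
    have hbase : (4:ℝ) * (r:ℝ)^2 ≤ ((9/2) * (r:ℝ)^3) ^ (4:ℕ) := by
      have h212 : (r:ℝ)^2 ≤ (r:ℝ)^12 := pow_le_pow_right₀ hr1 (by norm_num)
      nlinarith [pow_nonneg (le_trans zero_le_one hr1) 12]
    have hleft : (4:ℝ)^k * (r:ℝ)^(2*k) = ((4:ℝ) * (r:ℝ)^2) ^ k := by
      rw [mul_pow, pow_mul]
    rw [hleft]
    apply mul_le_mul_of_nonneg_right _ (sq_nonneg M)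
    exact pow_le_pow_left₀ (by positivity) hbase k
  have hdiv : (∑ x : G' n r, ‖∑ S ∈ F, a S * uS S x‖ ^ (4:ℕ)) / (r:ℝ)^n
      ≤ RHS0 ^ (4:ℕ) := by
    rw [div_le_iff₀ hrn]
    calc ∑ x : G' n r, ‖∑ S ∈ F, a S * uS S x‖ ^ (4:ℕ)
        ≤ (r:ℝ)^n * ((4:ℝ)^k * (r:ℝ)^(2*k) * M ^ 2) := hT4
      _ ≤ (r:ℝ)^n * RHS0 ^ (4:ℕ) := mul_le_mul_of_nonneg_left hQ (le_of_lt hrn)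
      _ = RHS0 ^ (4:ℕ) * (r:ℝ)^n := by ring
  rw [Lnorm]
  have hpt : ∀ x : G' n r, ‖∑ S ∈ F, a S * uS S x‖ ^ (4:ℝ)
      = ‖∑ S ∈ F, a S * uS S x‖ ^ (4:ℕ) := by
    intro x
    rw [show (4:ℝ) = ((4:ℕ):ℝ) by norm_num, Real.rpow_natCast]
  calc ((∑ x : G' n r, ‖∑ S ∈ F, a S * uS S x‖ ^ (4:ℝ)) / (r:ℝ)^n) ^ ((1:ℝ)/4)
      = ((∑ x : G' n r, ‖∑ S ∈ F, a S * uS S x‖ ^ (4:ℕ)) / (r:ℝ)^n) ^ ((1:ℝ)/4) := by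
        rw [Finset.sum_congr rfl fun x _ => hpt x]
    _ ≤ (RHS0 ^ (4:ℕ)) ^ ((1:ℝ)/4) := by
        apply Real.rpow_le_rpow _ hdiv (by norm_num)
        positivity
    _ = RHS0 := by
        rw [← Real.rpow_natCast RHS0 4, ← Real.rpow_mul hRHS0nn]
        norm_num
    _ = ((9 / 2) * (r : ℝ) ^ 3) ^ k * Real.sqrt (∑ S ∈ F, ‖a S‖ ^ 2) := by
        rw [hRHS0, hMF]
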